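/- Define i(a,L,v) = Ψ-interaction term given explicitly by i(a,L,v) = f(a,L,v) − g(a,v) with f(a,L,v) = ((a²+L²)/4)(2t+1) + (|v|/2)ln(1+1/t) − La√(t(t+1)) evaluated at t = t(a,L,v) (as in the minimization of Ψ at r = a), and g(a,v) = (a/4)√(a²+4|v|) + |v|·ln( (√(a²+4|v|)+a)²/(4|v|) ). Then lim_{a→0⁺} i(a,L,v) = (L/4)√(L²+4|v|) + |v|·ln( L(1+√(1+4|v|/L²)) / (2√|v|) ) = ∫₀^L √(ρ²/4 + |v|) dρ. -/

import Mathlib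

open Real Filter intervalIntegral


lemma aux_deriv (c : ℝ) (hc : 0 < c) (x : ℝ) :
    HasDerivAt (fun ρ : ℝ => ρ / 4 * Real.sqrt (ρ ^ 2 + 4 * c) +
      c * Real.log (ρ + Real.sqrt (ρ ^ 2 + 4 * c)))
      (Real.sqrt (x ^ 2 / 4 + c)) x := by
  have hS : 0 < x ^ 2 + 4 * c := by positivity
  have hr : 0 < Real.sqrt (x ^ 2 + 4 * c) := Real.sqrt_pos.mpr hS
  set r := Real.sqrt (x ^ 2 + 4 * c) with hrdef
  have hr2 : r ^ 2 = x ^ 2 + 4 * c := Real.sq_sqrt hS.le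
  have hxr : 0 < x + r := by
    have habs : |x| < r := by
      rw [hrdef, show |x| = Real.sqrt (x ^ 2) by rw [Real.sqrt_sq_eq_abs]]
      exact Real.sqrt_lt_sqrt (by positivity) (by nlinarith)
    nlinarith [neg_abs_le x]
  have hinner : HasDerivAt (fun ρ : ℝ => ρ ^ 2 + 4 * c) (2 * x) x := by
    simpa using (hasDerivAt_pow 2 x).add_const (4 * c)
  have hsq : HasDerivAt (fun ρ : ℝ => Real.sqrt (ρ ^ 2 + 4 * c)) (2 * x / (2 * r)) x :=
    hinner.sqrt hS.ne'
  have h1 : HasDerivAt (fun ρ : ℝ => ρ / 4 * Real.sqrt (ρ ^ 2 + 4 * c))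
      (1 / 4 * r + x / 4 * (2 * x / (2 * r))) x :=
    ((hasDerivAt_id x).div_const 4).mul hsq
  have h2 : HasDerivAt (fun ρ : ℝ => c * Real.log (ρ + Real.sqrt (ρ ^ 2 + 4 * c)))
      (c * ((1 + 2 * x / (2 * r)) / (x + r))) x :=
    (((hasDerivAt_id x).add hsq).log hxr.ne').const_mul c
  have hsum := h1.add h2
  refine hsum.congr_deriv ?_
  symm
  have h4 : Real.sqrt (x ^ 2 / 4 + c) = r / 2 := by
    rw [show x ^ 2 / 4 + c = (r / 2) ^ 2 by rw [div_pow, hr2]; ring,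
      Real.sqrt_sq (by positivity)]
  rw [h4]
  field_simp
  linear_combination (2*(x+r)) * hr2

lemma aux_int (L c : ℝ) (hL : 0 < L) (hc : 0 < c) :
    ∫ ρ in (0:ℝ)..L, Real.sqrt (ρ ^ 2 / 4 + c) =
      L / 4 * Real.sqrt (L ^ 2 + 4 * c) +
        c * Real.log ((L + Real.sqrt (L ^ 2 + 4 * c)) / (2 * Real.sqrt c)) := by
  have hcont : Continuous fun ρ : ℝ => Real.sqrt (ρ ^ 2 / 4 + c) := by fun_prop
  rw [intervalIntegral.integral_eq_sub_of_hasDerivAt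
    (fun x _ => aux_deriv c hc x) (hcont.intervalIntegrable 0 L)]
  have h4 : Real.sqrt ((0:ℝ) ^ 2 + 4 * c) = 2 * Real.sqrt c := by
    rw [show (0:ℝ) ^ 2 + 4 * c = 2 ^ 2 * c by ring, Real.sqrt_mul (by positivity),
      Real.sqrt_sq (by norm_num)]
  have hpos1 : 0 < L + Real.sqrt (L ^ 2 + 4 * c) := by positivity
  have hpos2 : 0 < 2 * Real.sqrt c := by positivity
  rw [h4]
  rw [Real.log_div hpos1.ne' hpos2.ne']
  simp
  ring

set_option maxHeartbeats 1000000 in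
/-- limit of the interaction term `i(a,L,v) = f(a,L,v) - g(a,v)`
as `a → 0⁺`, equal to `∫₀^L √(ρ²/4 + |v|)dρ`. -/
theorem stmt19 (L v : ℝ) (hL : 0 < L) (hv : v < 0)
    (s t f g i : ℝ → ℝ)
    (hs : ∀ a, s a = (2 * |v| * (L ^ 2 + a ^ 2) + L ^ 2 * a ^ 2) /
        (2 * (L ^ 2 - a ^ 2) ^ 2) +
      (1 / (L ^ 2 - a ^ 2)) * Real.sqrt
        ((2 * |v| * (L ^ 2 + a ^ 2) + L ^ 2 * a ^ 2) ^ 2 / (4 * (L ^ 2 - a ^ 2) ^ 2)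
          - |v| ^ 2))
    (ht : ∀ a, t a = -(1/2) + Real.sqrt (1/4 + s a))
    (hf : ∀ a, f a = (a ^ 2 + L ^ 2) / 4 * (2 * t a + 1) +
      |v| / 2 * Real.log (1 + 1 / t a) - L * a * Real.sqrt (t a * (t a + 1)))
    (hgdef : ∀ a, g a = a / 4 * Real.sqrt (a ^ 2 + 4 * |v|) +
      |v| * Real.log ((Real.sqrt (a ^ 2 + 4 * |v|) + a) ^ 2 / (4 * |v|)))
    (hi : ∀ a, i a = f a - g a) :
    Filter.Tendsto i (nhdsWithin 0 (Set.Ioi 0))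
      (nhds (L / 4 * Real.sqrt (L ^ 2 + 4 * |v|) +
        |v| * Real.log (L * (1 + Real.sqrt (1 + 4 * |v| / L ^ 2)) /
          (2 * Real.sqrt |v|)))) ∧
    L / 4 * Real.sqrt (L ^ 2 + 4 * |v|) +
        |v| * Real.log (L * (1 + Real.sqrt (1 + 4 * |v| / L ^ 2)) /
          (2 * Real.sqrt |v|)) =
      ∫ ρ in (0:ℝ)..L, Real.sqrt (ρ ^ 2 / 4 + |v|) := by

  have hc : 0 < |v| := abs_pos.mpr hv.ne
  set c := |v| with hcdef
  have hL2 : (0:ℝ) < L ^ 2 := pow_pos hL 2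
  set w := Real.sqrt (1 + 4 * c / L ^ 2) with hwdef
  have hw2 : w ^ 2 = 1 + 4 * c / L ^ 2 := Real.sq_sqrt (by positivity)
  have hw1 : 1 < w := by
    rw [hwdef, show (1:ℝ) = Real.sqrt 1 by simp]
    apply Real.sqrt_lt_sqrt (by norm_num)
    rw [Real.sqrt_one]
    nlinarith [div_pos (by linarith : (0:ℝ) < 4 * c) hL2]
  have hden : (2 * (L ^ 2 - (0:ℝ) ^ 2) ^ 2) ≠ 0 := by
    have : (0:ℝ) < 2 * (L ^ 2 - 0 ^ 2) ^ 2 := by nlinarith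
    exact this.ne'
  have hden2 : (L ^ 2 - (0:ℝ) ^ 2) ≠ 0 := by
    have : (0:ℝ) < L ^ 2 - 0 ^ 2 := by nlinarith
    exact this.ne'
  have hden3 : (4 * (L ^ 2 - (0:ℝ) ^ 2) ^ 2) ≠ 0 := by
    have : (0:ℝ) < 4 * (L ^ 2 - 0 ^ 2) ^ 2 := by nlinarith
    exact this.ne'
  -- continuity of s at 0 and its value
  have hscont : ContinuousAt s 0 := by
    rw [funext hs]
    apply ContinuousAt.add
    · exact ContinuousAt.div (by fun_prop) (by fun_prop) hden
    · apply ContinuousAt.mul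
      · exact ContinuousAt.div continuousAt_const (by fun_prop) hden2
      · apply ContinuousAt.sqrt
        apply ContinuousAt.sub _ continuousAt_const
        exact ContinuousAt.div (by fun_prop) (by fun_prop) hden3
  have hsval : s 0 = c / L ^ 2 := by
    rw [hs]
    norm_num
    rw [show (2 * c * L ^ 2) ^ 2 / (4 * (L ^ 2) ^ 2) - c ^ 2 = 0 by
      field_simp; ring]
    rw [Real.sqrt_zero]
    field_simp
    ring
  -- continuity of t at 0 and its value
  have htcont : ContinuousAt t 0 := by
    rw [funext ht]
    exact continuousAt_const.add ((continuousAt_const.add hscont).sqrt)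
  have htval : t 0 = (w - 1) / 2 := by
    rw [ht, hsval]
    rw [show (1:ℝ)/4 + c / L ^ 2 = (w / 2) ^ 2 by rw [div_pow, hw2]; ring,
      Real.sqrt_sq (by positivity)]
    ring
  have htpos : 0 < t 0 := by rw [htval]; linarith
  -- continuity of f at 0
  have hfcont : ContinuousAt f 0 := by
    rw [funext hf]
    apply ContinuousAt.sub
    · apply ContinuousAt.add
      · exact ContinuousAt.mul (by fun_prop) ((continuousAt_const.mul htcont).add
          continuousAt_const)
      · apply ContinuousAt.mul continuousAt_const
        apply ContinuousAt.log
          (continuousAt_const.add (ContinuousAt.div continuousAt_const htcont htpos.ne'))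
        have : 0 < 1 + 1 / t 0 := by positivity
        exact this.ne'
    · exact ContinuousAt.mul (by fun_prop)
        ((htcont.mul (htcont.add continuousAt_const)).sqrt)
  -- continuity of g at 0 and value 0
  have h4c : Real.sqrt ((0:ℝ) ^ 2 + 4 * c) = 2 * Real.sqrt c := by
    rw [show (0:ℝ) ^ 2 + 4 * c = 2 ^ 2 * c by ring, Real.sqrt_mul (by positivity),
      Real.sqrt_sq (by norm_num)]
  have hscpos : 0 < Real.sqrt c := Real.sqrt_pos.mpr hc
  have hgcont : ContinuousAt g 0 := by
    rw [funext hgdef]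
    apply ContinuousAt.add
    · exact ContinuousAt.mul (by fun_prop) (ContinuousAt.sqrt (by fun_prop))
    · apply ContinuousAt.mul continuousAt_const
      apply ContinuousAt.log
      · exact ContinuousAt.div
          (((ContinuousAt.sqrt (by fun_prop)).add continuousAt_id).pow 2)
          continuousAt_const (by simp; positivity)
      · show ((Real.sqrt ((0:ℝ) ^ 2 + 4 * c) + 0) ^ 2 / (4 * c)) ≠ 0
        rw [add_zero, h4c]
        positivity
  have hgval : g 0 = 0 := by
    rw [hgdef]
    rw [add_zero, h4c]
    rw [show (2 * Real.sqrt c) ^ 2 = 4 * c by rw [mul_pow]; rw [Real.sq_sqrt hc.le]; ring]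
    rw [div_self (by positivity : (4:ℝ) * c ≠ 0), Real.log_one]
    ring
  -- value of f at 0
  have hLw : Real.sqrt (L ^ 2 + 4 * c) = L * w := by
    rw [show L ^ 2 + 4 * c = (L * w) ^ 2 by rw [mul_pow, hw2]; field_simp,
      Real.sqrt_sq (by nlinarith)]
  have hfval : f 0 = L / 4 * Real.sqrt (L ^ 2 + 4 * c) +
      c * Real.log (L * (1 + w) / (2 * Real.sqrt c)) := by
    rw [hf, htval]
    have hsc : Real.sqrt c ^ 2 = c := Real.sq_sqrt hc.le
    have harg : 1 + 1 / ((w - 1) / 2) = (L * (1 + w) / (2 * Real.sqrt c)) ^ 2 := by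
      rw [div_pow, mul_pow, mul_pow, hsc]
      have hwm : w - 1 ≠ 0 := by linarith
      have hw2' : L ^ 2 * w ^ 2 = L ^ 2 + 4 * c := by
        rw [hw2]; field_simp
      field_simp
      linear_combination (-(1+w)) * hw2'
    rw [harg, Real.log_pow, hLw]
    push_cast
    ring
  -- combine
  have hicont : ContinuousAt i 0 := by
    rw [funext hi]; exact hfcont.sub hgcont
  have hival : i 0 = L / 4 * Real.sqrt (L ^ 2 + 4 * c) +
      c * Real.log (L * (1 + w) / (2 * Real.sqrt c)) := by
    rw [hi, hfval, hgval]; ring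
  have hten := hicont.tendsto
  rw [hival] at hten
  refine ⟨hten.mono_left nhdsWithin_le_nhds, ?_⟩
  rw [aux_int L c hL hc, hLw]
  rw [show L * (1 + w) = L + L * w from by ring]
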